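/- Fix c > 0 and 0 < μ1 < μ2, and define g : [0, μ1) → ℝ by g(λ) = 1 − ((μ2 − λ)·e^{−(μ1 − λ)·c} − (μ1 − λ)·e^{−(μ2 − λ)·c})/(μ2 − μ1). Then g is strictly antitone on [0, μ1): for all 0 ≤ λ1 < λ2 < μ1, g(λ2) < g(λ1). -/

import Mathlib

open Real

/-- `x ↦ e^x (x-1)` is strictly monotone on `[0, ∞)`. -/
lemma key_exp_mono {a b : ℝ} (ha : 0 < a) (hab : a < b) :
    exp a * (a - 1) < exp b * (b - 1) := by
  have hmono : StrictMonoOn (fun x : ℝ => exp x * (x - 1)) (Set.Ici 0) := by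
    apply strictMonoOn_of_deriv_pos (convex_Ici 0)
    · fun_prop
    · intro x hx
      rw [interior_Ici] at hx
      have hd : HasDerivAt (fun x : ℝ => exp x * (x - 1)) (exp x * (x - 1) + exp x * 1) x := by
        simpa using (Real.hasDerivAt_exp x).fun_mul ((hasDerivAt_id x).sub_const 1)
      rw [hd.deriv]
      nlinarith [mul_pos (exp_pos x) (Set.mem_Ioi.mp hx), exp_pos x]
  exact hmono (Set.mem_Ici.2 ha.le) (Set.mem_Ici.2 (ha.trans hab).le) hab

/-- The closed-form joint job satisfaction rate is strictly antitone in the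
arrival rate `λ` on `[0, μ1)`. -/
theorem joint_satisfaction_strictAntiOn
    (c μ1 μ2 : ℝ) (hc : 0 < c) (hμ1 : 0 < μ1) (hμ12 : μ1 < μ2)
    (g : ℝ → ℝ)
    (hg : ∀ l, g l = 1 - ((μ2 - l) * exp (-(μ1 - l) * c)
        - (μ1 - l) * exp (-(μ2 - l) * c)) / (μ2 - μ1)) :
    StrictAntiOn g (Set.Ico 0 μ1) := by
  have hgeq : g = fun l => 1 - ((μ2 - l) * exp (-(μ1 - l) * c)
      - (μ1 - l) * exp (-(μ2 - l) * c)) / (μ2 - μ1) := funext hg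
  subst hgeq
  have hμ : (0:ℝ) < μ2 - μ1 := by linarith
  apply strictAntiOn_of_deriv_neg (convex_Ico 0 μ1)
  · fun_prop
  · intro x hx
    rw [interior_Ico] at hx
    obtain ⟨hx0, hx1⟩ := hx
    -- derivatives of the two exponential terms
    have hin1 : HasDerivAt (fun l : ℝ => -(μ1 - l) * c) c x := by
      have := (((hasDerivAt_id x).const_sub μ1).neg).mul_const c
      simpa using this
    have hin2 : HasDerivAt (fun l : ℝ => -(μ2 - l) * c) c x := by
      have := (((hasDerivAt_id x).const_sub μ2).neg).mul_const c
      simpa using this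
    have h1 : HasDerivAt (fun l : ℝ => (μ2 - l) * exp (-(μ1 - l) * c))
        ((-1) * exp (-(μ1 - x) * c) + (μ2 - x) * (exp (-(μ1 - x) * c) * c)) x := by
      have := (((hasDerivAt_id x).const_sub μ2)).fun_mul hin1.exp
      simpa using this
    have h2 : HasDerivAt (fun l : ℝ => (μ1 - l) * exp (-(μ2 - l) * c))
        ((-1) * exp (-(μ2 - x) * c) + (μ1 - x) * (exp (-(μ2 - x) * c) * c)) x := by
      have := (((hasDerivAt_id x).const_sub μ1)).fun_mul hin2.exp
      simpa using this
    have hF : HasDerivAt (fun l : ℝ => 1 - ((μ2 - l) * exp (-(μ1 - l) * c)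
        - (μ1 - l) * exp (-(μ2 - l) * c)) / (μ2 - μ1))
        (-((((-1) * exp (-(μ1 - x) * c) + (μ2 - x) * (exp (-(μ1 - x) * c) * c))
          - ((-1) * exp (-(μ2 - x) * c) + (μ1 - x) * (exp (-(μ2 - x) * c) * c))) / (μ2 - μ1))) x := by
      exact (((h1.sub h2).div_const (μ2 - μ1)).const_sub 1)
    rw [hF.deriv]
    -- show the numerator is positive
    set a := (μ1 - x) * c with ha_def
    set b := (μ2 - x) * c with hb_def
    have ha : 0 < a := by apply mul_pos; linarith; exact hc
    have hab : a < b := by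
      apply mul_lt_mul_of_pos_right _ hc; linarith
    have key := key_exp_mono ha hab
    -- exp(-a)(b-1) > exp(-b)(a-1)
    have hkey2 : exp (-b) * (a - 1) < exp (-a) * (b - 1) := by
      rw [exp_neg, exp_neg, inv_mul_eq_div, inv_mul_eq_div,
        div_lt_div_iff₀ (exp_pos b) (exp_pos a)]
      nlinarith [key]
    have hnum : 0 < (((-1) * exp (-(μ1 - x) * c) + (μ2 - x) * (exp (-(μ1 - x) * c) * c))
        - ((-1) * exp (-(μ2 - x) * c) + (μ1 - x) * (exp (-(μ2 - x) * c) * c))) := by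
      have e1 : -(μ1 - x) * c = -a := by rw [ha_def]; ring
      have e2 : -(μ2 - x) * c = -b := by rw [hb_def]; ring
      have h3 : (μ2 - x) * (exp (-a) * c) = exp (-a) * b := by rw [hb_def]; ring
      have h4 : (μ1 - x) * (exp (-b) * c) = exp (-b) * a := by rw [ha_def]; ring
      rw [e1, e2]
      nlinarith [hkey2, h3, h4]
    have := div_pos hnum hμ
    linarith
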